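/- arXiv:2310.04415 — 3 statements merged into one kernel-verified Lean document; each statement's English description precedes it below -/
import Mathlib

section
/- Let ℓ(y, z) = log(1 + exp(−y z)) be the binary cross-entropy loss with label y ∈ {−1, 1}. Then the square of its derivative with respect to z is bounded by the loss itself: (ℓ'(y,z))² ≤ ℓ(y,z) for all z ∈ ℝ. -/
lemma bce_deriv (c z : ℝ) :
    deriv (fun z' : ℝ => Real.log (1 + Real.exp (c * z'))) z
      = c * Real.exp (c * z) / (1 + Real.exp (c * z)) := by
  have hpos : (0:ℝ) < 1 + Real.exp (c * z) := by positivity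
  have h1 : HasDerivAt (fun z' : ℝ => 1 + Real.exp (c * z'))
      (c * Real.exp (c * z)) z := by
    have := ((hasDerivAt_id z).const_mul c).exp
    simpa [mul_comm] using this.const_add 1
  have h2 := h1.log (ne_of_gt hpos)
  simpa [mul_comm, mul_div_assoc] using h2.deriv

/-- Self-bounding property of the binary cross-entropy loss
`ℓ(y,z) = log(1 + exp(-y z))` with label `y ∈ {-1, 1}`:
the square of its derivative in `z` is bounded by the loss itself. -/
theorem bce_self_bounding (y : ℝ) (hy : y = -1 ∨ y = 1) (z : ℝ) :
    (deriv (fun z' : ℝ => Real.log (1 + Real.exp (-y * z'))) z) ^ 2 ≤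
      Real.log (1 + Real.exp (-y * z)) := by
  rw [bce_deriv]
  set u := Real.exp (-y * z) with hu
  have hupos : 0 < u := Real.exp_pos _
  have hpos : (0:ℝ) < 1 + u := by positivity
  have hy2 : y ^ 2 = 1 := by rcases hy with h | h <;> simp [h]
  have hsq : (-y * u / (1 + u)) ^ 2 = (u / (1 + u)) ^ 2 := by
    field_simp
    ring_nf
    rw [hy2]
  rw [hsq]
  set t := u / (1 + u) with ht
  have ht0 : 0 < t := by positivity
  have ht1 : t < 1 := by rw [ht, div_lt_one hpos]; linarith
  have hlog : t ≤ Real.log (1 + u) := by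
    have h := Real.log_le_sub_one_of_pos (show (0:ℝ) < 1/(1+u) by positivity)
    rw [Real.log_div one_ne_zero (ne_of_gt hpos), Real.log_one] at h
    have : 1 / (1 + u) - 1 = -t := by rw [ht]; field_simp; ring
    linarith [this ▸ h]
  calc t ^ 2 ≤ t := by nlinarith
    _ ≤ Real.log (1 + u) := hlog
end

section
/- With the setup of the previous statement, if additionally m ≤ ‖∇_w h(w, x)‖ and there exists c > 0 with (ℓ'(yᵢ, h(w,xᵢ)))² ≥ c ℓ(yᵢ, h(w,xᵢ)) for all i, then E[‖g(w)‖²] ≥ c m² L(w) − ‖∇_w L(w)‖². -/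
/-- Lower bound on the SGD (batch size 1) gradient-noise scale:
if `m ≤ ‖∇_w h(w,x)‖` (with `m ≥ 0`) and `(ℓ')² ≥ c ℓ` along the data, then
`E[‖g(w)‖²] ≥ c m² L(w) − ‖∇L(w)‖²`. -/
theorem sgd_noise_lower_bound {p n : ℕ} {D : Type*} (hn : 0 < n)
    (h : EuclideanSpace ℝ (Fin p) → D → ℝ)
    (x : Fin n → D) (y : Fin n → ℝ) (hy : ∀ i, y i = -1 ∨ y i = 1)
    (hdiff : ∀ d, Differentiable ℝ (fun w => h w d))
    (m : ℝ) (hm : 0 ≤ m) (hmlb : ∀ w d, m ≤ ‖gradient (fun w' => h w' d) w‖)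
    (c : ℝ) (hc : 0 < c)
    (w : EuclideanSpace ℝ (Fin p))
    (hself : ∀ i, c * Real.log (1 + Real.exp (-(y i) * h w (x i))) ≤
      (deriv (fun z : ℝ => Real.log (1 + Real.exp (-(y i) * z))) (h w (x i))) ^ 2) :
    c * m ^ 2 * ((1 / n : ℝ) * ∑ i, Real.log (1 + Real.exp (-(y i) * h w (x i)))) -
        ‖gradient (fun w' => (1 / n : ℝ) *
          ∑ j, Real.log (1 + Real.exp (-(y j) * h w' (x j)))) w‖ ^ 2
      ≤ (1 / n : ℝ) * ∑ i, ‖(deriv (fun z : ℝ => Real.log (1 + Real.exp (-(y i) * z)))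
          (h w (x i))) • gradient (fun w' => h w' (x i)) w -
        gradient (fun w' => (1 / n : ℝ) *
          ∑ j, Real.log (1 + Real.exp (-(y j) * h w' (x j)))) w‖ ^ 2 := by
  have hfdiff : ∀ i : Fin n,
      Differentiable ℝ (fun z : ℝ => Real.log (1 + Real.exp (-(y i) * z))) := by
    intro i
    apply Differentiable.log
    · exact (differentiable_const 1).add
        (Real.differentiable_exp.comp (differentiable_id.const_mul _))
    · intro z; positivity
  set a : Fin n → EuclideanSpace ℝ (Fin p) := fun i =>
    (deriv (fun z : ℝ => Real.log (1 + Real.exp (-(y i) * z))) (h w (x i))) •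
      gradient (fun w' => h w' (x i)) w with ha
  -- gradient of the total loss
  have hG : HasGradientAt
      (fun w' => (1 / n : ℝ) * ∑ j, Real.log (1 + Real.exp (-(y j) * h w' (x j))))
      ((1 / n : ℝ) • ∑ j, a j) w := by
    rw [hasGradientAt_iff_hasFDerivAt, map_smul, map_sum]
    simp only [ha, map_smul]
    apply HasFDerivAt.const_mul
    apply HasFDerivAt.fun_sum
    intro j _
    have hg : HasFDerivAt (fun w' => h w' (x j))
        (InnerProductSpace.toDual ℝ _ (gradient (fun w' => h w' (x j)) w)) w :=
      ((hdiff (x j)) w).hasGradientAt.hasFDerivAt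
    exact ((hfdiff j).differentiableAt.hasDerivAt).comp_hasFDerivAt w hg
  rw [hG.gradient]
  set G' : EuclideanSpace ℝ (Fin p) := (1 / n : ℝ) • ∑ j, a j with hG'
  have hnR : (0 : ℝ) < (n : ℝ) := Nat.cast_pos.mpr hn
  have hsum : ∑ j, a j = (n : ℝ) • G' := by
    rw [hG', smul_smul]
    rw [mul_one_div, div_self (ne_of_gt hnR), one_smul]
  -- key algebraic identity: (1/n) ∑ ‖a i - G'‖² = (1/n) ∑ ‖a i‖² - ‖G'‖²
  have hexp : ∀ i, ‖a i - G'‖ ^ 2 =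
      ‖a i‖ ^ 2 - 2 * inner ℝ (a i) G' + ‖G'‖ ^ 2 := by
    intro i
    rw [@norm_sub_sq_real]
  have hkey : (1 / n : ℝ) * ∑ i, ‖a i - G'‖ ^ 2
      = (1 / n : ℝ) * ∑ i, ‖a i‖ ^ 2 - ‖G'‖ ^ 2 := by
    have hs : ∑ i, ‖a i - G'‖ ^ 2
        = ∑ i, ‖a i‖ ^ 2 - 2 * inner ℝ (∑ i, a i) G' + (n : ℝ) * ‖G'‖ ^ 2 := by
      rw [Finset.sum_congr rfl (fun i _ => hexp i)]
      rw [Finset.sum_add_distrib, Finset.sum_sub_distrib, ← Finset.mul_sum,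
        ← sum_inner, Finset.sum_const, Finset.card_univ, Fintype.card_fin,
        nsmul_eq_mul]
    rw [hs, hsum]
    have : (inner ℝ ((n : ℝ) • G') G' : ℝ) = (n : ℝ) * ‖G'‖ ^ 2 := by
      rw [real_inner_smul_left, real_inner_self_eq_norm_sq]
    rw [this]
    field_simp
    ring
  rw [hkey]
  have hterm : ∀ i, c * m ^ 2 * Real.log (1 + Real.exp (-(y i) * h w (x i)))
      ≤ ‖a i‖ ^ 2 := by
    intro i
    rw [ha]
    rw [norm_smul, mul_pow, Real.norm_eq_abs, sq_abs]
    calc c * m ^ 2 * Real.log (1 + Real.exp (-(y i) * h w (x i)))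
        = (c * Real.log (1 + Real.exp (-(y i) * h w (x i)))) * m ^ 2 := by ring
      _ ≤ (deriv (fun z : ℝ => Real.log (1 + Real.exp (-(y i) * z))) (h w (x i))) ^ 2 *
            ‖gradient (fun w' => h w' (x i)) w‖ ^ 2 := by
          apply mul_le_mul (hself i) (pow_le_pow_left₀ hm (hmlb w (x i)) 2)
            (sq_nonneg m) (sq_nonneg _)
  have hsum_le : c * m ^ 2 * ((1 / n : ℝ) * ∑ i, Real.log (1 + Real.exp (-(y i) * h w (x i))))
      ≤ (1 / n : ℝ) * ∑ i, ‖a i‖ ^ 2 := by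
    have : ∑ i, c * m ^ 2 * Real.log (1 + Real.exp (-(y i) * h w (x i))) ≤ ∑ i, ‖a i‖ ^ 2 :=
      Finset.sum_le_sum fun i _ => hterm i
    calc c * m ^ 2 * ((1 / n : ℝ) * ∑ i, Real.log (1 + Real.exp (-(y i) * h w (x i))))
        = (1 / n : ℝ) * ∑ i, c * m ^ 2 * Real.log (1 + Real.exp (-(y i) * h w (x i))) := by
          rw [← Finset.mul_sum]; ring
      _ ≤ (1 / n : ℝ) * ∑ i, ‖a i‖ ^ 2 := by
          apply mul_le_mul_of_nonneg_left this (by positivity)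
  linarith
end

section
/- Let f : ℝᵖ \ {0} → ℝ be scale-invariant and differentiable. Consider the weight decay gradient step w⁺ = (1 − ηλ) w − η ∇f(w) with 0 < ηλ < 1. Then the normalized iterate satisfies w⁺/‖w⁺‖ = Π_S(w/‖w‖ − η_eff ∇f(w/‖w‖)) where Π_S(v) = v/‖v‖ and η_eff = η / ((1 − ηλ) ‖w‖²). -/
open InnerProductSpace

lemma gradient_scale_inv {p : ℕ}
    (f : EuclideanSpace ℝ (Fin p) → ℝ)
    (hsc : ∀ α : ℝ, 0 < α → ∀ w : EuclideanSpace ℝ (Fin p), w ≠ 0 → f (α • w) = f w)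
    (hdiff : ∀ w : EuclideanSpace ℝ (Fin p), w ≠ 0 → DifferentiableAt ℝ f w)
    (α : ℝ) (hα : 0 < α) (w : EuclideanSpace ℝ (Fin p)) (hw : w ≠ 0) :
    gradient f w = α • gradient f (α • w) := by
  have hαw : α • w ≠ 0 := smul_ne_zero (ne_of_gt hα) hw
  have h1 : HasGradientAt f (gradient f (α • w)) (α • w) :=
    (hdiff _ hαw).hasGradientAt
  have h2 : HasFDerivAt f (toDual ℝ _ (gradient f (α • w))) (α • w) :=
    h1.hasFDerivAt
  have hlin : HasFDerivAt (fun v : EuclideanSpace ℝ (Fin p) => α • v)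
      (α • ContinuousLinearMap.id ℝ (EuclideanSpace ℝ (Fin p))) w :=
    (α • ContinuousLinearMap.id ℝ (EuclideanSpace ℝ (Fin p))).hasFDerivAt
  have h3 : HasFDerivAt (fun v => f (α • v))
      ((toDual ℝ _ (gradient f (α • w))).comp
        (α • ContinuousLinearMap.id ℝ (EuclideanSpace ℝ (Fin p)))) w :=
    h2.comp w hlin
  have hcomp : (toDual ℝ (EuclideanSpace ℝ (Fin p)) (gradient f (α • w))).comp
      (α • ContinuousLinearMap.id ℝ (EuclideanSpace ℝ (Fin p)))
      = toDual ℝ _ (α • gradient f (α • w)) := by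
    ext u
    simp [real_inner_smul_left, real_inner_smul_right]
  rw [hcomp] at h3
  have heq : (fun v => f (α • v)) =ᶠ[nhds w] f := by
    filter_upwards [IsOpen.mem_nhds (isOpen_compl_singleton) hw] with v hv
    exact hsc α hα v hv
  have h4 : HasFDerivAt f (toDual ℝ _ (α • gradient f (α • w))) w :=
    h3.congr_of_eventuallyEq heq.symm
  simpa only [LinearIsometryEquiv.symm_apply_apply] using h4.hasGradientAt.gradient

/-- Weight decay acts as an effective learning rate for scale-invariant
functions: the normalized iterate of the weight decay gradient step
`w⁺ = (1−ηλ)w − η∇f(w)` equals the radial projection onto the sphere of a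
gradient step on the normalized iterate with learning rate
`η_eff = η / ((1−ηλ)‖w‖²)`. -/
theorem weight_decay_effective_lr {p : ℕ}
    (f : EuclideanSpace ℝ (Fin p) → ℝ)
    (hsc : ∀ α : ℝ, 0 < α → ∀ w : EuclideanSpace ℝ (Fin p), w ≠ 0 → f (α • w) = f w)
    (hdiff : ∀ w : EuclideanSpace ℝ (Fin p), w ≠ 0 → DifferentiableAt ℝ f w)
    (η lam : ℝ) (hη : 0 < η) (hel : 0 < η * lam) (hel1 : η * lam < 1)
    (w : EuclideanSpace ℝ (Fin p)) (hw : w ≠ 0) :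
    ‖(1 - η * lam) • w - η • gradient f w‖⁻¹ • ((1 - η * lam) • w - η • gradient f w) =
      (fun v : EuclideanSpace ℝ (Fin p) => ‖v‖⁻¹ • v)
        ((‖w‖⁻¹ • w) - (η / ((1 - η * lam) * ‖w‖ ^ 2)) • gradient f (‖w‖⁻¹ • w)) := by
  have hwn : (0:ℝ) < ‖w‖ := norm_pos_iff.mpr hw
  have hwhat : (‖w‖⁻¹ • w : EuclideanSpace ℝ (Fin p)) ≠ 0 :=
    smul_ne_zero (inv_ne_zero hwn.ne') hw
  have hgrad : gradient f (‖w‖⁻¹ • w) = ‖w‖ • gradient f w := by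
    have := gradient_scale_inv f hsc hdiff ‖w‖ hwn (‖w‖⁻¹ • w) hwhat
    rw [smul_smul, mul_inv_cancel₀ hwn.ne', one_smul] at this
    exact this
  have h1 : (0:ℝ) < 1 - η * lam := by linarith
  set u := (1 - η * lam) • w - η • gradient f w with hu
  set c := ((1 - η * lam) * ‖w‖)⁻¹ with hc
  have hcpos : (0:ℝ) < c := by positivity
  have hv : (‖w‖⁻¹ • w) - (η / ((1 - η * lam) * ‖w‖ ^ 2)) • gradient f (‖w‖⁻¹ • w)
      = c • u := by
    rw [hgrad, hu, hc]
    match_scalars <;> field_simp <;> ring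
  simp only [hv]
  rw [norm_smul, Real.norm_eq_abs, abs_of_pos hcpos, mul_inv, smul_smul]
  rw [mul_comm c⁻¹ ‖u‖⁻¹, mul_assoc, inv_mul_cancel₀ hcpos.ne', mul_one]
end
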